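/- Let G be undirected, s, t nonadjacent, A ⊆ V(G)\{s,t} with A not adjacent to t, and suppose every vertex of A lies in some minimum s,t-separator of G (i.e., A consists of vertices contained in minimum s,t-separators). If T is a minimum ({s} ∪ A), t-separator of G of cardinality κ_{s,t}(G), then A ⊆ C_s(G−T). -/

import Mathlib

open SimpleGraph

variable {V : Type*}

/-- `u` can reach `v` in `G − S`: there is a walk whose support avoids `S`. -/
def ReachAvoid (G : SimpleGraph V) (S : Set V) (u v : V) : Prop :=
  ∃ p : G.Walk u v, ∀ w ∈ p.support, w ∉ S

/-- The union of the connected components of `G − S` that meet `X`. -/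
def SetReach (G : SimpleGraph V) (S X : Set V) : Set V :=
  {v | ∃ x ∈ X, ReachAvoid G S x v}

/-- Open neighborhood of a vertex set: vertices outside `X` adjacent to some vertex of `X`. -/
def Nbhd (G : SimpleGraph V) (X : Set V) : Set V :=
  {v | v ∉ X ∧ ∃ x ∈ X, G.Adj x v}

/-- `S` is an `A,B`-separator of `G`. -/
def IsSep (G : SimpleGraph V) (A B S : Set V) : Prop :=
  Disjoint S A ∧ Disjoint S B ∧ ∀ a ∈ A, ∀ b ∈ B, ¬ ReachAvoid G S a b

/-- `S` is an inclusion-minimal `A,B`-separator of `G`. -/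
def IsMinlSep (G : SimpleGraph V) (A B S : Set V) : Prop :=
  IsSep G A B S ∧ ∀ S' ⊂ S, ¬ IsSep G A B S'

/-- `S` is a minimum-cardinality `A,B`-separator of `G`. -/
def IsMinSep (G : SimpleGraph V) (A B S : Set V) : Prop :=
  IsSep G A B S ∧ ∀ S', IsSep G A B S' → S.ncard ≤ S'.ncard

/-- The minimum cardinality of an `A,B`-separator of `G` (`∞` if none exists). -/
noncomputable def kappa (G : SimpleGraph V) (A B : Set V) : ℕ∞ :=
  sInf {n : ℕ∞ | ∃ S : Set V, IsSep G A B S ∧ (S.ncard : ℕ∞) = n}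


section Aux

variable {G : SimpleGraph V}

lemma reachAvoid_symm {S : Set V} {u v : V} (h : ReachAvoid G S u v) : ReachAvoid G S v u := by
  obtain ⟨p, hp⟩ := h
  exact ⟨p.reverse, by simpa [SimpleGraph.Walk.support_reverse] using hp⟩

lemma reachAvoid_trans {S : Set V} {u v w : V} (h1 : ReachAvoid G S u v)
    (h2 : ReachAvoid G S v w) : ReachAvoid G S u w := by
  obtain ⟨p, hp⟩ := h1
  obtain ⟨q, hq⟩ := h2
  refine ⟨p.append q, fun x hx => ?_⟩
  rcases (SimpleGraph.Walk.mem_support_append_iff p q).1 hx with h | h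
  · exact hp x h
  · exact hq x h

lemma mem_setReach_singleton {S : Set V} {s v : V} :
    v ∈ SetReach G S {s} ↔ ReachAvoid G S s v := by
  simp [SetReach]

lemma setReach_not_mem {S X : Set V} {v : V} (h : v ∈ SetReach G S X) : v ∉ S := by
  obtain ⟨x, _, p, hp⟩ := h
  exact hp v p.end_mem_support

lemma isSep_symm {A B S : Set V} (h : IsSep G A B S) : IsSep G B A S :=
  ⟨h.2.1, h.1, fun b hb a ha hr => h.2.2 a ha b hb (reachAvoid_symm hr)⟩

lemma exists_first_hit {Z : Set V} :
    ∀ {u v : V} (p : G.Walk u v), u ∉ Z → (∃ w ∈ p.support, w ∈ Z) →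
    ∃ x ∈ Z, ∃ q : G.Walk u x,
      (∀ w ∈ q.support, w ≠ x → w ∉ Z) ∧ ∀ w ∈ q.support, w ∈ p.support := by
  intro u v p
  induction p with
  | nil =>
    intro hu hm
    obtain ⟨w, hw, hwZ⟩ := hm
    simp only [SimpleGraph.Walk.support_nil, List.mem_singleton] at hw
    exact absurd (hw ▸ hwZ) hu
  | @cons u b v h p ih =>
    intro hu hm
    by_cases hb : b ∈ Z
    · refine ⟨b, hb, SimpleGraph.Walk.cons h SimpleGraph.Walk.nil, ?_, ?_⟩
      · intro w hw hwx
        simp only [SimpleGraph.Walk.support_cons, SimpleGraph.Walk.support_nil,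
          List.mem_cons, List.mem_singleton] at hw
        rcases hw with rfl | hw
        · exact hu
        · rcases hw with rfl | h
          · exact absurd rfl hwx
          · exact absurd h List.not_mem_nil
      · intro w hw
        simp only [SimpleGraph.Walk.support_cons, SimpleGraph.Walk.support_nil,
          List.mem_cons, List.mem_singleton] at hw ⊢
        rcases hw with rfl | hw
        · exact Or.inl rfl
        · rcases hw with rfl | h
          · exact Or.inr p.start_mem_support
          · exact absurd h List.not_mem_nil
    · have hm' : ∃ w ∈ p.support, w ∈ Z := by
        obtain ⟨w, hw, hwZ⟩ := hm
        simp only [SimpleGraph.Walk.support_cons, List.mem_cons] at hw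
        rcases hw with rfl | hw
        · exact absurd hwZ hu
        · exact ⟨w, hw, hwZ⟩
      obtain ⟨x, hx, q, hq1, hq2⟩ := ih hb hm'
      refine ⟨x, hx, SimpleGraph.Walk.cons h q, ?_, ?_⟩
      · intro w hw hwx
        simp only [SimpleGraph.Walk.support_cons, List.mem_cons] at hw
        rcases hw with rfl | hw
        · exact hu
        · exact hq1 w hw hwx
      · intro w hw
        simp only [SimpleGraph.Walk.support_cons, List.mem_cons] at hw ⊢
        rcases hw with rfl | hw
        · exact Or.inl rfl
        · exact Or.inr (hq2 w hw)

/-- The submodularity separator: crossing two `s,t`-separators on the `s`-side. -/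
lemma sep_cross {s t : V} {S T : Set V} (hS : IsSep G {s} {t} S) (hT : IsSep G {s} {t} T) :
    IsSep G {s} {t}
      ((S ∩ SetReach G T {s}) ∪ (S ∩ T) ∪ (T ∩ SetReach G S {s})) := by
  set Y := (S ∩ SetReach G T {s}) ∪ (S ∩ T) ∪ (T ∩ SetReach G S {s}) with hY
  have hYsub : Y ⊆ S ∪ T := by
    intro w hw
    rcases hw with (hw | hw) | hw
    · exact Or.inl hw.1
    · exact Or.inl hw.1
    · exact Or.inr hw.1
  have hsS : s ∉ S := fun h => (hS.1.ne_of_mem h rfl) rfl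
  have hsT : s ∉ T := fun h => (hT.1.ne_of_mem h rfl) rfl
  have htS : t ∉ S := fun h => (hS.2.1.ne_of_mem h rfl) rfl
  have htT : t ∉ T := fun h => (hT.2.1.ne_of_mem h rfl) rfl
  refine ⟨?_, ?_, ?_⟩
  · rw [Set.disjoint_singleton_right]
    exact fun h => (hYsub h).elim hsS hsT
  · rw [Set.disjoint_singleton_right]
    exact fun h => (hYsub h).elim htS htT
  · intro a ha b hb hr
    obtain rfl : s = a := ha.symm
    obtain rfl : t = b := hb.symm
    obtain ⟨p, hp⟩ := hr
    -- p avoids Y; p must meet S, hence meets S ∪ T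
    have hmeet : ∃ w ∈ p.support, w ∈ S ∪ T := by
      by_contra hc
      push_neg at hc
      exact hS.2.2 s rfl t rfl ⟨p, fun w hw => fun hwS => hc w hw (Or.inl hwS)⟩
    have hsZ : s ∉ (S ∪ T : Set V) := fun h => h.elim hsS hsT
    obtain ⟨x, hx, q, hq1, hq2⟩ := exists_first_hit p hsZ hmeet
    have hxY : x ∉ Y := hp x (hq2 x q.end_mem_support)
    rcases hx with hxS | hxT
    · -- x ∈ S; x ∉ T (else in S ∩ T ⊆ Y); q avoids T, so x ∈ SetReach G T {s}
      have hxT : x ∉ T := fun h => hxY (Or.inl (Or.inr ⟨hxS, h⟩))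
      have : x ∈ SetReach G T {s} := by
        rw [mem_setReach_singleton]
        refine ⟨q, fun w hw hwT => ?_⟩
        by_cases hwx : w = x
        · exact hxT (hwx ▸ hwT)
        · exact hq1 w hw hwx (Or.inr hwT)
      exact hxY (Or.inl (Or.inl ⟨hxS, this⟩))
    · -- x ∈ T; x ∉ S (else previous case would cover; here: else x ∈ S ∩ T ⊆ Y)
      have hxS : x ∉ S := fun h => hxY (Or.inl (Or.inr ⟨h, hxT⟩))
      have : x ∈ SetReach G S {s} := by
        rw [mem_setReach_singleton]
        refine ⟨q, fun w hw hwS => ?_⟩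
        by_cases hwx : w = x
        · exact hxS (hwx ▸ hwS)
        · exact hq1 w hw hwx (Or.inl hwS)
      exact hxY (Or.inr ⟨hxT, this⟩)

lemma setReach_st_disjoint {s t : V} {S : Set V} (hS : ¬ ReachAvoid G S s t) {v : V}
    (h1 : v ∈ SetReach G S {s}) (h2 : v ∈ SetReach G S {t}) : False := by
  rw [mem_setReach_singleton] at h1 h2
  exact hS (reachAvoid_trans h1 (reachAvoid_symm h2))

lemma kappa_le_of_isSep {G : SimpleGraph V} {A B S : Set V} (h : IsSep G A B S) :
    kappa G A B ≤ (S.ncard : ℕ∞) :=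
  sInf_le ⟨S, h, rfl⟩

end Aux

/-- If every vertex of `A` lies in some minimum `s,t`-separator, `A` is not adjacent to `t`,
and `T` is an `({s} ∪ A),t`-separator of cardinality `κ_{s,t}(G)`, then `A ⊆ C_s(G−T)`. -/
theorem subset_comp_of_minSep_vertices {V : Type*} [Fintype V] (G : SimpleGraph V) (s t : V)
    (hst : s ≠ t) (hadj : ¬ G.Adj s t) (A : Set V) (hsA : s ∉ A) (htA : t ∉ A)
    (hAt : ∀ a ∈ A, a ≠ t ∧ ¬ G.Adj a t)
    (hAmin : ∀ a ∈ A, ∃ S : Set V, IsMinSep G {s} {t} S ∧ a ∈ S)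
    (T : Set V) (hT : IsSep G ({s} ∪ A) {t} T)
    (hTcard : (T.ncard : ℕ∞) = kappa G {s} {t}) :
    A ⊆ SetReach G T {s} := by
  classical
  intro a ha
  obtain ⟨S, ⟨hSsep, hSmin⟩, haS⟩ := hAmin a ha
  -- T is an s,t-separator
  have hTsep : IsSep G {s} {t} T :=
    ⟨hT.1.mono_right (Set.subset_union_left), hT.2.1,
      fun x hx y hy => hT.2.2 x (Or.inl hx) y hy⟩
  have haT : a ∉ T := fun h => (hT.1.ne_of_mem h (Or.inr ha)) rfl
  -- cardinalities: S.ncard = T.ncard, and T.ncard ≤ any separator's card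
  have hκle : ∀ Y : Set V, IsSep G {s} {t} Y → T.ncard ≤ Y.ncard := by
    intro Y hY
    have := kappa_le_of_isSep hY
    rw [← hTcard] at this
    exact_mod_cast this
  have hST : S.ncard = T.ncard :=
    le_antisymm (hSmin T hTsep) (hκle S hSsep)
  -- the two crossing separators
  set Rs := SetReach G T {s} with hRs
  set Rt := SetReach G T {t} with hRt
  set Qs := SetReach G S {s} with hQs
  set Qt := SetReach G S {t} with hQt
  set Y₁ := (S ∩ Rs) ∪ (S ∩ T) ∪ (T ∩ Qs) with hY₁
  set Y₂ := (S ∩ Rt) ∪ (S ∩ T) ∪ (T ∩ Qt) with hY₂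
  have hY₁sep : IsSep G {s} {t} Y₁ := sep_cross hSsep hTsep
  have hY₂sep : IsSep G {s} {t} Y₂ :=
    isSep_symm (sep_cross (isSep_symm hSsep) (isSep_symm hTsep))
  -- union and intersection bounds
  have hUsub : Y₁ ∪ Y₂ ⊆ S ∪ T := by
    rintro w ((((h | h) | h) | ((h | h) | h)))
    · exact Or.inl h.1
    · exact Or.inl h.1
    · exact Or.inr h.1
    · exact Or.inl h.1
    · exact Or.inl h.1
    · exact Or.inr h.1
  have hRst : ∀ v, v ∈ Rs → v ∈ Rt → False := fun v h1 h2 =>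
    setReach_st_disjoint (hTsep.2.2 s rfl t rfl) h1 h2
  have hQst : ∀ v, v ∈ Qs → v ∈ Qt → False := fun v h1 h2 =>
    setReach_st_disjoint (hSsep.2.2 s rfl t rfl) h1 h2
  have hIsub : Y₁ ∩ Y₂ ⊆ S ∩ T := by
    rintro w ⟨((h1 | h1) | h1), ((h2 | h2) | h2)⟩
    · exact absurd h2.2 (fun h => hRst w h1.2 h)
    · exact ⟨h1.1, h2.2⟩
    · exact ⟨h1.1, h2.1⟩
    · exact ⟨h2.1, h1.2⟩
    · exact h1
    · exact ⟨h1.1, h2.1⟩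
    · exact ⟨h2.1, h1.1⟩
    · exact ⟨h2.1, h1.1⟩
    · exact absurd h2.2 (fun h => hQst w h1.2 h)
  -- counting
  have e1 : (Y₁ ∪ Y₂).ncard + (Y₁ ∩ Y₂).ncard = Y₁.ncard + Y₂.ncard :=
    Set.ncard_union_add_ncard_inter Y₁ Y₂ (Set.toFinite _) (Set.toFinite _)
  have e2 : (S ∪ T).ncard + (S ∩ T).ncard = S.ncard + T.ncard :=
    Set.ncard_union_add_ncard_inter S T (Set.toFinite _) (Set.toFinite _)
  have i1 : (Y₁ ∩ Y₂).ncard ≤ (S ∩ T).ncard :=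
    Set.ncard_le_ncard hIsub (Set.toFinite _)
  have hb1 : T.ncard ≤ Y₁.ncard := hκle Y₁ hY₁sep
  have hb2 : T.ncard ≤ Y₂.ncard := hκle Y₂ hY₂sep
  have hUle : (S ∪ T).ncard ≤ (Y₁ ∪ Y₂).ncard := by omega
  have hUeq : Y₁ ∪ Y₂ = S ∪ T :=
    Set.eq_of_subset_of_ncard_le hUsub hUle (Set.toFinite _)
  -- a ∈ S ⊆ S ∪ T = Y₁ ∪ Y₂
  have haY : a ∈ Y₁ ∪ Y₂ := hUeq ▸ (Or.inl haS : a ∈ S ∪ T)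
  rcases haY with ((h | h) | h) | ((h | h) | h)
  · exact h.2
  · exact absurd h.2 haT
  · exact absurd h.1 haT
  · -- a ∈ S ∩ Rt : contradiction, T separates A from t
    exfalso
    exact hT.2.2 a (Or.inr ha) t rfl (reachAvoid_symm (mem_setReach_singleton.1 h.2))
  · exact absurd h.2 haT
  · exact absurd h.1 haT
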